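/- Let Y be a nonempty finite type (the discretized wall-normal grid) and let u : Y → (Fin 3 → ℂ) be a velocity perturbation field. Then the L2 operator norm of the block-diagonal matrix Matrix.blockDiagonal (fun y => uΞ (u y)) equals the maximum over y : Y of the Euclidean norm Real.sqrt (‖(u y) 0‖² + ‖(u y) 1‖² + ‖(u y) 2‖²); that is, the H∞ norm of the uncertainty gain equals the largest velocity-perturbation magnitude present in the flow. -/

import Mathlib

open scoped Matrix.Norms.L2Operator
open Matrix (conjTranspose)
open scoped Matrix

noncomputable section

/-- The 3×9 matrix gain representing the nonlinear advection term `u·∇u`: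
`(uΞ q) i (i', j) = if i = i' then -(q j) else 0`. -/
def uΞ (q : Fin 3 → ℂ) : Matrix (Fin 3) (Fin 3 × Fin 3) ℂ :=
  fun i p => if i = p.1 then -(q p.2) else 0

lemma uXi_mul_conjTranspose (q : Fin 3 → ℂ) :
    uΞ q * (uΞ q)ᴴ =
      ((‖q 0‖ ^ 2 + ‖q 1‖ ^ 2 + ‖q 2‖ ^ 2 : ℝ) : ℂ) • (1 : Matrix (Fin 3) (Fin 3) ℂ) := by
  ext i i'
  simp only [Matrix.mul_apply, Matrix.conjTranspose_apply, uΞ, Matrix.smul_apply,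
    Matrix.one_apply, Fintype.sum_prod_type, smul_eq_mul]
  by_cases h : i = i'
  · subst h
    simp only [if_pos rfl, mul_ite, mul_zero, ite_mul, zero_mul]
    rw [Fin.sum_univ_three]
    fin_cases i <;>
      simp [Fin.sum_univ_three, ← Complex.normSq_eq_norm_sq, Complex.normSq_eq_conj_mul_self,
        Complex.conj_mul', Complex.sq_norm, Complex.mul_conj] <;> ring
  · rw [if_neg h, mul_zero]
    apply Finset.sum_eq_zero
    intro i'' _
    apply Finset.sum_eq_zero
    intro j _
    rcases eq_or_ne i i'' with rfl | h1
    · rw [if_neg (fun hh : i' = i => h hh.symm), star_zero, mul_zero]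
    · rw [if_neg h1, zero_mul]

lemma norm_uXi (q : Fin 3 → ℂ) :
    ‖uΞ q‖ = Real.sqrt (‖q 0‖ ^ 2 + ‖q 1‖ ^ 2 + ‖q 2‖ ^ 2) := by
  have key : ‖uΞ q‖ * ‖uΞ q‖ = ‖q 0‖ ^ 2 + ‖q 1‖ ^ 2 + ‖q 2‖ ^ 2 := by
    have h1 : ‖uΞ q‖ * ‖uΞ q‖ = ‖(uΞ q)ᴴ‖ * ‖(uΞ q)ᴴ‖ := by
      rw [Matrix.l2_opNorm_conjTranspose]
    rw [h1, ← Matrix.l2_opNorm_conjTranspose_mul_self, Matrix.conjTranspose_conjTranspose,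
      uXi_mul_conjTranspose, norm_smul]
    rw [norm_one, mul_one, Complex.norm_real, Real.norm_of_nonneg (by positivity)]
  rw [← Real.sqrt_mul_self (norm_nonneg (uΞ q)), key]

open Matrix in
/-- The L2 operator norm of a block diagonal matrix is the sup of the block norms. -/
lemma l2_opNorm_blockDiagonal_eq {Y m n : Type*} [Fintype Y] [DecidableEq Y] [Nonempty Y]
    [Fintype m] [Fintype n] [DecidableEq n]
    (f : Y → Matrix m n ℂ) :
    ‖Matrix.blockDiagonal f‖ =
      Finset.univ.sup' Finset.univ_nonempty (fun y => ‖f y‖) := by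
  classical
  set M := Finset.univ.sup' Finset.univ_nonempty (fun y => ‖f y‖) with hMdef
  have hMle : ∀ y : Y, ‖f y‖ ≤ M := fun y => Finset.le_sup' (fun y => ‖f y‖) (Finset.mem_univ y)
  have hM0 : 0 ≤ M := le_trans (norm_nonneg _) (hMle (Classical.arbitrary Y))
  -- the action of the block diagonal matrix on a vector
  have hmv : ∀ (x : (n × Y) → ℂ) (i : m) (y : Y),
      (Matrix.blockDiagonal f *ᵥ x) (i, y) = (f y *ᵥ fun j => x (j, y)) i := by
    intro x i y
    simp only [Matrix.mulVec, dotProduct, Fintype.sum_prod_type, Matrix.blockDiagonal_apply]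
    rw [Finset.sum_comm]
    rw [Finset.sum_eq_single y]
    · simp
    · intro b _ hb
      apply Finset.sum_eq_zero
      intro j _
      rw [if_neg (Ne.symm hb), zero_mul]
    · intro h; exact absurd (Finset.mem_univ y) h
  apply le_antisymm
  · rw [Matrix.l2_opNorm_def]
    apply ContinuousLinearMap.opNorm_le_bound _ hM0
    intro x
    have hx : ∀ y : Y, ‖(WithLp.equiv 2 (m → ℂ)).symm
        ((f y) *ᵥ fun j => x (j, y))‖ ≤ ‖f y‖ * ‖(WithLp.equiv 2 (n → ℂ)).symm
        (fun j => x (j, y))‖ := fun y => Matrix.l2_opNorm_mulVec (f y)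
          ((WithLp.equiv 2 (n → ℂ)).symm (fun j => x (j, y)))
    -- work with squares
    have hsq : ‖(Matrix.toEuclideanLin (Matrix.blockDiagonal f)) x‖ ^ 2 ≤ (M * ‖x‖) ^ 2 := by
      rw [EuclideanSpace.norm_eq, Real.sq_sqrt (by positivity)]
      have hxnorm : ‖x‖ ^ 2 = ∑ y : Y, ∑ j : n, ‖x (j, y)‖ ^ 2 := by
        rw [EuclideanSpace.norm_eq, Real.sq_sqrt (by positivity), Fintype.sum_prod_type,
          Finset.sum_comm]
      calc ∑ p : m × Y, ‖(Matrix.toEuclideanLin (Matrix.blockDiagonal f)) x p‖ ^ 2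
          = ∑ y : Y, ∑ i : m, ‖(f y *ᵥ fun j => x (j, y)) i‖ ^ 2 := by
            rw [Fintype.sum_prod_type, Finset.sum_comm]
            refine Finset.sum_congr rfl fun y _ => Finset.sum_congr rfl fun i _ => ?_
            congr 1
            exact congrArg norm (hmv (WithLp.equiv 2 _ x) i y)
        _ ≤ ∑ y : Y, (M * Real.sqrt (∑ j : n, ‖x (j, y)‖ ^ 2)) ^ 2 := by
            apply Finset.sum_le_sum
            intro y _
            have h2 : ‖(WithLp.equiv 2 (m → ℂ)).symm ((f y) *ᵥ fun j => x (j, y))‖ ^ 2 ≤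
                (‖f y‖ * ‖(WithLp.equiv 2 (n → ℂ)).symm (fun j => x (j, y))‖) ^ 2 := by
              apply pow_le_pow_left₀ (norm_nonneg _) (hx y)
            rw [EuclideanSpace.norm_eq, EuclideanSpace.norm_eq,
              Real.sq_sqrt (by positivity)] at h2
            refine le_trans h2 ?_
            apply pow_le_pow_left₀ (by positivity)
            exact mul_le_mul_of_nonneg_right (hMle y) (Real.sqrt_nonneg _)
        _ ≤ ∑ y : Y, M ^ 2 * (∑ j : n, ‖x (j, y)‖ ^ 2) := by
            apply Finset.sum_le_sum
            intro y _
            rw [mul_pow, Real.sq_sqrt (by positivity)]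
        _ = (M * ‖x‖) ^ 2 := by
            rw [← Finset.mul_sum, ← hxnorm, mul_pow]
    calc ‖(Matrix.toEuclideanLin (Matrix.blockDiagonal f)) x‖
        = Real.sqrt (‖(Matrix.toEuclideanLin (Matrix.blockDiagonal f)) x‖ ^ 2) :=
          (Real.sqrt_sq (norm_nonneg _)).symm
      _ ≤ Real.sqrt ((M * ‖x‖) ^ 2) := Real.sqrt_le_sqrt hsq
      _ = M * ‖x‖ := Real.sqrt_sq (by positivity)
  · apply Finset.sup'_le
    intro y₀ _
    rw [Matrix.l2_opNorm_def]
    apply ContinuousLinearMap.opNorm_le_bound _ (norm_nonneg _)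
    intro v
    set x : EuclideanSpace ℂ (n × Y) :=
      (WithLp.equiv 2 ((n × Y) → ℂ)).symm (fun p => if p.2 = y₀ then v p.1 else 0) with hxdef
    have hxv : ∀ j : n, x (j, y₀) = v j := fun j => by simp [hxdef]
    have hxnorm : ‖x‖ = ‖v‖ := by
      rw [EuclideanSpace.norm_eq, EuclideanSpace.norm_eq]
      congr 1
      rw [Fintype.sum_prod_type, Finset.sum_comm, Finset.sum_eq_single y₀]
      · simp [hxdef]
      · intro b _ hb
        apply Finset.sum_eq_zero
        intro j _
        simp [hxdef, if_neg hb]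
      · intro h; exact absurd (Finset.mem_univ y₀) h
    have hTx : ∀ i : m, ∀ y : Y, (Matrix.toEuclideanLin (Matrix.blockDiagonal f)) x (i, y)
        = if y = y₀ then (Matrix.toEuclideanLin (f y₀)) v i else 0 := by
      intro i y
      have := hmv (WithLp.equiv 2 _ x) i y
      rcases eq_or_ne y y₀ with rfl | hy
      · rw [if_pos rfl]
        refine this.trans ?_
        congr 1
        funext j
        exact hxv j
      · rw [if_neg hy]
        refine this.trans ?_
        have hz : (fun j => (WithLp.equiv 2 ((n × Y) → ℂ)) x (j, y)) = (0 : n → ℂ) := by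
          funext j; simp [hxdef, if_neg hy]
        rw [hz, Matrix.mulVec_zero]
        rfl
    have hTxnorm : ‖(Matrix.toEuclideanLin (Matrix.blockDiagonal f)) x‖
        = ‖(Matrix.toEuclideanLin (f y₀)) v‖ := by
      rw [EuclideanSpace.norm_eq, EuclideanSpace.norm_eq]
      congr 1
      rw [Fintype.sum_prod_type, Finset.sum_comm, Finset.sum_eq_single y₀]
      · refine Finset.sum_congr rfl fun i _ => ?_
        rw [hTx i y₀, if_pos rfl]
      · intro b _ hb
        apply Finset.sum_eq_zero
        intro i _
        rw [hTx i b, if_neg hb, norm_zero]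
        simp
      · intro h; exact absurd (Finset.mem_univ y₀) h
    calc ‖(Matrix.toEuclideanLin (f y₀)) v‖
        = ‖(Matrix.toEuclideanLin (Matrix.blockDiagonal f)) x‖ := hTxnorm.symm
      _ ≤ ‖Matrix.blockDiagonal f‖ * ‖x‖ := by
          rw [Matrix.l2_opNorm_def]
          exact ((Matrix.toEuclideanLin.trans LinearMap.toContinuousLinearMap)
            (Matrix.blockDiagonal f)).le_opNorm x
      _ = ‖Matrix.blockDiagonal f‖ * ‖v‖ := by rw [hxnorm]

theorem l2_opNorm_blockDiagonal_uXi {Y : Type*}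
    [Fintype Y] [DecidableEq Y] [Nonempty Y]
    (u : Y → (Fin 3 → ℂ)) :
    ‖Matrix.blockDiagonal (fun y => uΞ (u y))‖ =
      Finset.univ.sup' Finset.univ_nonempty
        (fun y => Real.sqrt (‖u y 0‖ ^ 2 + ‖u y 1‖ ^ 2 + ‖u y 2‖ ^ 2)) := by
  rw [l2_opNorm_blockDiagonal_eq]
  exact Finset.sup'_congr _ rfl (fun y _ => norm_uXi (u y))
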